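/- Define the star operation: for nonzero a, b ∈ ℂ[s], a * b is the monic polynomial whose set of roots is {ρ + σ : ρ root of a, σ root of b}, and where the multiplicity of a root γ in a * b equals max{ m_ρ(a) + m_σ(b) − 1 : ρ + σ = γ, ρ root of a, σ root of b }, with m denoting root multiplicity. Then for nonzero a, b, q ∈ ℂ[s], lcm(a,b) * q = lcm(a * q, b * q). -/

import Mathlib

open Polynomial in
open scoped Classical in
/-- The star operation: the monic polynomial whose roots are the pairwise sums of roots
of `a` and `b`, where the multiplicity of `γ` is
`max { rootMultiplicity ρ a + rootMultiplicity σ b - 1 : ρ + σ = γ }`.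
If `a` or `b` has no roots (e.g. is a nonzero constant), the product is empty and
`pstar a b = 1`. -/
noncomputable def pstar (a b : Polynomial ℂ) : Polynomial ℂ :=
  ∏ γ ∈ (a.roots.toFinset ×ˢ b.roots.toFinset).image (fun p => p.1 + p.2),
    (X - C γ) ^
      (((a.roots.toFinset ×ˢ b.roots.toFinset).filter (fun p => p.1 + p.2 = γ)).sup
        (fun p => a.rootMultiplicity p.1 + b.rootMultiplicity p.2 - 1))

open Polynomial


open scoped Classical in
lemma rm_le_of_dvd {p q : ℂ[X]} (h : p ∣ q) (hq : q ≠ 0) (x : ℂ) :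
    rootMultiplicity x p ≤ rootMultiplicity x q := by
  rw [le_rootMultiplicity_iff hq]
  exact (pow_rootMultiplicity_dvd p x).trans h

lemma rm_gcd (a b : ℂ[X]) (ha : a ≠ 0) (hb : b ≠ 0) (x : ℂ) :
    rootMultiplicity x (gcd a b) = min (rootMultiplicity x a) (rootMultiplicity x b) := by
  apply le_antisymm
  · exact le_min (rm_le_of_dvd (gcd_dvd_left a b) ha x) (rm_le_of_dvd (gcd_dvd_right a b) hb x)
  · rw [le_rootMultiplicity_iff (gcd_ne_zero_of_left ha)]
    exact dvd_gcd ((pow_dvd_pow _ (min_le_left _ _)).trans (pow_rootMultiplicity_dvd a x))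
      ((pow_dvd_pow _ (min_le_right _ _)).trans (pow_rootMultiplicity_dvd b x))

lemma rm_lcm (a b : ℂ[X]) (ha : a ≠ 0) (hb : b ≠ 0) (x : ℂ) :
    rootMultiplicity x (lcm a b) = max (rootMultiplicity x a) (rootMultiplicity x b) := by
  have hl : lcm a b ≠ 0 := by simp [lcm_eq_zero_iff, ha, hb]
  have hg : gcd a b ≠ 0 := gcd_ne_zero_of_left ha
  have hassoc := gcd_mul_lcm a b
  have h1 : rootMultiplicity x (gcd a b * lcm a b) = rootMultiplicity x (a * b) :=
    le_antisymm (rm_le_of_dvd hassoc.dvd (mul_ne_zero ha hb) x)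
      (rm_le_of_dvd hassoc.symm.dvd (mul_ne_zero hg hl) x)
  rw [rootMultiplicity_mul (mul_ne_zero hg hl), rootMultiplicity_mul (mul_ne_zero ha hb),
    rm_gcd a b ha hb] at h1
  omega

open scoped Classical in
lemma monic_pstar (a b : ℂ[X]) : (pstar a b).Monic :=
  monic_prod_of_monic _ _ fun γ _ => (monic_X_sub_C γ).pow _

open scoped Classical in
lemma rm_pstar (a b : ℂ[X]) (γ : ℂ) :
    rootMultiplicity γ (pstar a b) =
      ((a.roots.toFinset ×ˢ b.roots.toFinset).filter (fun p => p.1 + p.2 = γ)).sup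
        (fun p => a.rootMultiplicity p.1 + b.rootMultiplicity p.2 - 1) := by
  have hne : pstar a b ≠ 0 := (monic_pstar a b).ne_zero
  rw [← count_roots]
  unfold pstar at hne ⊢
  rw [roots_prod _ _ hne]
  simp only [roots_pow, roots_X_sub_C, Multiset.count_bind, Multiset.count_nsmul,
    Multiset.count_singleton, mul_ite, mul_one, mul_zero]
  rw [← Finset.sum_eq_multiset_sum, Finset.sum_ite_eq]
  split_ifs with h
  · rfl
  · rw [Finset.filter_eq_empty_iff.mpr fun p hp hpγ => h (Finset.mem_image.mpr ⟨p, hp, hpγ⟩),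
      Finset.sup_empty]
    rfl

set_option maxHeartbeats 1000000 in
lemma monic_ext {p q : ℂ[X]} (hp : p.Monic) (hq : q.Monic)
    (h : ∀ x, rootMultiplicity x p = rootMultiplicity x q) : p = q := by
  classical
  have hroots : p.roots = q.roots := Multiset.ext.mpr fun x => by
    rw [count_roots, count_roots, h]
  calc p = (p.roots.map fun x => X - C x).prod :=
        (IsAlgClosed.splits p).eq_prod_roots_of_monic hp
    _ = q := by
        rw [hroots, ← (IsAlgClosed.splits q).eq_prod_roots_of_monic hq]

lemma monic_lcm {p q : ℂ[X]} (hp : p ≠ 0) (hq : q ≠ 0) : (lcm p q).Monic := by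
  classical
  have h : lcm p q ≠ 0 := by simp [lcm_eq_zero_iff, hp, hq]
  have h2 := monic_normalize h
  rwa [normalize_lcm] at h2

lemma mem_roots_fin {p : ℂ[X]} (hp : p ≠ 0) {x : ℂ} :
    x ∈ p.roots.toFinset ↔ 0 < rootMultiplicity x p := by
  rw [Multiset.mem_toFinset, mem_roots hp, ← rootMultiplicity_pos hp]


/-- For nonzero `a, b, q ∈ ℂ[s]`, `lcm(a,b) * q = lcm(a * q, b * q)`
for the star operation. -/
theorem stmt5 (a b q : Polynomial ℂ) (ha : a ≠ 0) (hb : b ≠ 0) (hq : q ≠ 0) :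
    pstar (lcm a b) q = lcm (pstar a q) (pstar b q) := by
  classical
  have hl : lcm a b ≠ 0 := by simp [lcm_eq_zero_iff, ha, hb]
  have haq := (monic_pstar a q).ne_zero
  have hbq := (monic_pstar b q).ne_zero
  apply monic_ext (monic_pstar _ _) (monic_lcm haq hbq)
  intro γ
  rw [rm_pstar, rm_lcm _ _ haq hbq, rm_pstar, rm_pstar]
  apply le_antisymm
  · apply Finset.sup_le
    rintro ⟨ρ, σ⟩ hp
    rw [Finset.mem_filter, Finset.mem_product] at hp
    obtain ⟨⟨hρ, hσ⟩, hsum⟩ := hp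
    rw [mem_roots_fin hl, rm_lcm a b ha hb] at hρ
    simp only [rm_lcm a b ha hb]
    rcases le_total (rootMultiplicity ρ b) (rootMultiplicity ρ a) with hle | hle
    · rw [max_eq_left hle]
      refine le_max_of_le_left (Finset.le_sup (f := fun p : ℂ × ℂ =>
        rootMultiplicity p.1 a + rootMultiplicity p.2 q - 1) (b := (ρ, σ)) ?_)
      rw [Finset.mem_filter, Finset.mem_product]
      exact ⟨⟨(mem_roots_fin ha).mpr (hρ.trans_le (max_le le_rfl hle)), hσ⟩, hsum⟩
    · rw [max_eq_right hle]
      refine le_max_of_le_right (Finset.le_sup (f := fun p : ℂ × ℂ =>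
        rootMultiplicity p.1 b + rootMultiplicity p.2 q - 1) (b := (ρ, σ)) ?_)
      rw [Finset.mem_filter, Finset.mem_product]
      exact ⟨⟨(mem_roots_fin hb).mpr (hρ.trans_le (max_le hle le_rfl)), hσ⟩, hsum⟩
  · apply max_le
    · apply Finset.sup_le
      rintro ⟨ρ, σ⟩ hp
      rw [Finset.mem_filter, Finset.mem_product] at hp
      obtain ⟨⟨hρ, hσ⟩, hsum⟩ := hp
      rw [mem_roots_fin ha] at hρ
      refine le_trans ?_ (Finset.le_sup (f := fun p : ℂ × ℂ =>
        rootMultiplicity p.1 (lcm a b) + rootMultiplicity p.2 q - 1) (b := (ρ, σ)) ?_)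
      · simp only [rm_lcm a b ha hb]
        omega
      · rw [Finset.mem_filter, Finset.mem_product]
        refine ⟨⟨(mem_roots_fin hl).mpr ?_, hσ⟩, hsum⟩
        rw [rm_lcm a b ha hb]; omega
    · apply Finset.sup_le
      rintro ⟨ρ, σ⟩ hp
      rw [Finset.mem_filter, Finset.mem_product] at hp
      obtain ⟨⟨hρ, hσ⟩, hsum⟩ := hp
      rw [mem_roots_fin hb] at hρ
      refine le_trans ?_ (Finset.le_sup (f := fun p : ℂ × ℂ =>
        rootMultiplicity p.1 (lcm a b) + rootMultiplicity p.2 q - 1) (b := (ρ, σ)) ?_)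
      · simp only [rm_lcm a b ha hb]
        omega
      · rw [Finset.mem_filter, Finset.mem_product]
        refine ⟨⟨(mem_roots_fin hl).mpr ?_, hσ⟩, hsum⟩
        rw [rm_lcm a b ha hb]; omega
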